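/- For every odd prime p ≥ 3, the graph ER'(p) (real-orthogonality graph on the standard representatives of the projective plane over F_p) contains a subgraph isomorphic to G_13, and hence χ(ER'(p)) ≥ 4. -/

import Mathlib

/-- The standard representatives of the one-dimensional subspaces of `F_p³`. -/
def projReps (p : ℕ) [Fact p.Prime] : Finset (Fin 3 → ZMod p) :=
  {![0, 0, 1]} ∪
    (Finset.univ.image fun a : ZMod p => ![0, 1, a]) ∪
    (Finset.univ.image fun ab : ZMod p × ZMod p => ![1, ab.1, ab.2])

/-- The integer representatives with entries in `{0, ±1, …, ±(p-1)/2}`. -/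
def ERVerts (p : ℕ) [Fact p.Prime] : Finset (Fin 3 → ℤ) :=
  (projReps p).image fun v => fun i => (v i).valMinAbs

/-- The graph `ER'(p)`: adjacency is orthogonality over ℝ (equivalently ℤ). -/
def ERGraph (p : ℕ) [Fact p.Prime] : SimpleGraph (ERVerts p) :=
  SimpleGraph.fromRel (fun u v => dotProduct (u : Fin 3 → ℤ) (v : Fin 3 → ℤ) = 0)

/-- The 13 vectors in ℝ³ defining the graph `G₁₃`. -/
def g13Vecs : Fin 13 → (Fin 3 → ℝ) :=
  ![![1,0,0], ![0,1,0], ![0,0,1], ![1,1,0], ![1,-1,0], ![1,0,1], ![1,0,-1],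
    ![0,1,1], ![0,1,-1], ![1,1,1], ![1,1,-1], ![1,-1,1], ![-1,1,1]]

/-- The orthogonality graph `G₁₃`. -/
def G13 : SimpleGraph (Fin 13) :=
  SimpleGraph.fromRel (fun i j => dotProduct (g13Vecs i) (g13Vecs j) = 0)

/-! ### Auxiliary definitions -/

/-- Integer version of the 13 vectors. -/
def g13Z : Fin 13 → (Fin 3 → ℤ) :=
  ![![1,0,0], ![0,1,0], ![0,0,1], ![1,1,0], ![1,-1,0], ![1,0,1], ![1,0,-1],
    ![0,1,1], ![0,1,-1], ![1,1,1], ![1,1,-1], ![1,-1,1], ![-1,1,1]]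

/-- The integer representatives of the 13 vectors (last one sign-flipped). -/
def uvecs : Fin 13 → (Fin 3 → ℤ) :=
  ![![1,0,0], ![0,1,0], ![0,0,1], ![1,1,0], ![1,-1,0], ![1,0,1], ![1,0,-1],
    ![0,1,1], ![0,1,-1], ![1,1,1], ![1,1,-1], ![1,-1,1], ![1,-1,-1]]

/-- The `ZMod p` representatives of the 13 vectors. -/
def wvecs (p : ℕ) : Fin 13 → (Fin 3 → ZMod p) :=
  ![![1,0,0], ![0,1,0], ![0,0,1], ![1,1,0], ![1,-1,0], ![1,0,1], ![1,0,-1],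
    ![0,1,1], ![0,1,-1], ![1,1,1], ![1,1,-1], ![1,-1,1], ![1,-1,-1]]

lemma g13Vecs_eq (i : Fin 13) : g13Vecs i = fun k => ((g13Z i k : ℤ) : ℝ) := by
  fin_cases i
  · show ![(1:ℝ),0,0] = fun k => (((![1,0,0] : Fin 3 → ℤ) k : ℤ) : ℝ)
    funext k; fin_cases k <;> norm_num
  · show ![(0:ℝ),1,0] = fun k => (((![0,1,0] : Fin 3 → ℤ) k : ℤ) : ℝ)
    funext k; fin_cases k <;> norm_num
  · show ![(0:ℝ),0,1] = fun k => (((![0,0,1] : Fin 3 → ℤ) k : ℤ) : ℝ)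
    funext k; fin_cases k <;> norm_num
  · show ![(1:ℝ),1,0] = fun k => (((![1,1,0] : Fin 3 → ℤ) k : ℤ) : ℝ)
    funext k; fin_cases k <;> norm_num
  · show ![(1:ℝ),-1,0] = fun k => (((![1,-1,0] : Fin 3 → ℤ) k : ℤ) : ℝ)
    funext k; fin_cases k <;> norm_num
  · show ![(1:ℝ),0,1] = fun k => (((![1,0,1] : Fin 3 → ℤ) k : ℤ) : ℝ)
    funext k; fin_cases k <;> norm_num
  · show ![(1:ℝ),0,-1] = fun k => (((![1,0,-1] : Fin 3 → ℤ) k : ℤ) : ℝ)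
    funext k; fin_cases k <;> norm_num
  · show ![(0:ℝ),1,1] = fun k => (((![0,1,1] : Fin 3 → ℤ) k : ℤ) : ℝ)
    funext k; fin_cases k <;> norm_num
  · show ![(0:ℝ),1,-1] = fun k => (((![0,1,-1] : Fin 3 → ℤ) k : ℤ) : ℝ)
    funext k; fin_cases k <;> norm_num
  · show ![(1:ℝ),1,1] = fun k => (((![1,1,1] : Fin 3 → ℤ) k : ℤ) : ℝ)
    funext k; fin_cases k <;> norm_num
  · show ![(1:ℝ),1,-1] = fun k => (((![1,1,-1] : Fin 3 → ℤ) k : ℤ) : ℝ)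
    funext k; fin_cases k <;> norm_num
  · show ![(1:ℝ),-1,1] = fun k => (((![1,-1,1] : Fin 3 → ℤ) k : ℤ) : ℝ)
    funext k; fin_cases k <;> norm_num
  · show ![(-1:ℝ),1,1] = fun k => (((![-1,1,1] : Fin 3 → ℤ) k : ℤ) : ℝ)
    funext k; fin_cases k <;> norm_num

lemma g13_dot (i j : Fin 13) :
    dotProduct (g13Vecs i) (g13Vecs j)
      = ((dotProduct (g13Z i) (g13Z j) : ℤ) : ℝ) := by
  rw [g13Vecs_eq i, g13Vecs_eq j]
  simp [dotProduct]

lemma g13_adj_iff (i j : Fin 13) :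
    G13.Adj i j ↔ i ≠ j ∧ dotProduct (g13Z i) (g13Z j) = 0 := by
  have hc : dotProduct (g13Vecs j) (g13Vecs i)
      = dotProduct (g13Vecs i) (g13Vecs j) := dotProduct_comm _ _
  rw [G13, SimpleGraph.fromRel_adj, hc, or_self, g13_dot, Int.cast_eq_zero]

lemma G13_adj (i j : Fin 13) (h : i ≠ j)
    (hd : dotProduct (g13Z i) (g13Z j) = 0) : G13.Adj i j :=
  (g13_adj_iff i j).2 ⟨h, hd⟩

lemma g13_not_colorable : ¬ G13.Colorable 3 := by
  rintro ⟨C⟩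
  have E : ∀ i j : Fin 13, i ≠ j → dotProduct (g13Z i) (g13Z j) = 0 →
      C i ≠ C j := fun i j h hd => C.valid (G13_adj i j h hd)
  have h01 := E 0 1 (by decide) (by decide)
  have h02 := E 0 2 (by decide) (by decide)
  have h12 := E 1 2 (by decide) (by decide)
  have h23 := E 2 3 (by decide) (by decide)
  have h24 := E 2 4 (by decide) (by decide)
  have h34 := E 3 4 (by decide) (by decide)
  have h15 := E 1 5 (by decide) (by decide)
  have h16 := E 1 6 (by decide) (by decide)
  have h56 := E 5 6 (by decide) (by decide)
  have h07 := E 0 7 (by decide) (by decide)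
  have h08 := E 0 8 (by decide) (by decide)
  have h78 := E 7 8 (by decide) (by decide)
  have h49 := E 4 9 (by decide) (by decide)
  have h69 := E 6 9 (by decide) (by decide)
  have h89 := E 8 9 (by decide) (by decide)
  have h410 := E 4 10 (by decide) (by decide)
  have h510 := E 5 10 (by decide) (by decide)
  have h710 := E 7 10 (by decide) (by decide)
  have h311 := E 3 11 (by decide) (by decide)
  have h611 := E 6 11 (by decide) (by decide)
  have h711 := E 7 11 (by decide) (by decide)
  have h312 := E 3 12 (by decide) (by decide)
  have h512 := E 5 12 (by decide) (by decide)
  have h812 := E 8 12 (by decide) (by decide)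
  have two : ∀ a b c x : Fin 3, a ≠ b → a ≠ c → b ≠ c → x ≠ c → x = a ∨ x = b := by decide
  have key : ∀ a b c w : Fin 3, a ≠ b → a ≠ c → b ≠ c → w ≠ a → w ≠ b → w ≠ c → False := by
    decide
  have gen : ∀ a b c u v w : Fin 3, a ≠ b → a ≠ c → b ≠ c →
      u ≠ c → u ≠ a → v ≠ a → v ≠ b → w ≠ u → w ≠ a → w ≠ v → False := by
    set_option synthInstance.maxSize 2000 in decide
  have l4 := two (C 0) (C 1) (C 2) (C 4) h01 h02 h12 h24.symm
  have l6 := two (C 0) (C 2) (C 1) (C 6) h02 h01 h12.symm h16.symm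
  have l8 := two (C 1) (C 2) (C 0) (C 8) h12 h01.symm h02.symm h08.symm
  rcases l4 with h4 | h4 <;> rcases l6 with h6 | h6 <;> rcases l8 with h8 | h8
  · -- (a, a, b) : witness 11
    exact gen (C 0) (C 1) (C 2) (C 3) (C 7) (C 11) h01 h02 h12
      h23.symm (ne_of_ne_of_eq h34 h4) h07.symm (ne_of_ne_of_eq h78 h8)
      h311.symm (ne_of_ne_of_eq h611.symm h6) h711.symm
  · -- (a, a, c) : witness 10
    exact gen (C 0) (C 2) (C 1) (C 5) (C 7) (C 10) h02 h01 h12.symm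
      h15.symm (ne_of_ne_of_eq h56 h6) h07.symm (ne_of_ne_of_eq h78 h8)
      h510.symm (ne_of_ne_of_eq h410.symm h4) h710.symm
  · -- (a, c, b) : witness 9
    exact key (C 0) (C 1) (C 2) (C 9) h01 h02 h12
      (ne_of_ne_of_eq h49.symm h4) (ne_of_ne_of_eq h89.symm h8)
      (ne_of_ne_of_eq h69.symm h6)
  · -- (a, c, c) : witness 12
    exact gen (C 2) (C 1) (C 0) (C 3) (C 5) (C 12) h12.symm h02.symm h01.symm
      (ne_of_ne_of_eq h34 h4) h23.symm (ne_of_ne_of_eq h56 h6) h15.symm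
      h312.symm (ne_of_ne_of_eq h812.symm h8) h512.symm
  · -- (b, a, b) : witness 12
    exact gen (C 1) (C 0) (C 2) (C 3) (C 5) (C 12) h01.symm h12 h02
      h23.symm (ne_of_ne_of_eq h34 h4) h15.symm (ne_of_ne_of_eq h56 h6)
      h312.symm (ne_of_ne_of_eq h812.symm h8) h512.symm
  · -- (b, a, c) : witness 9
    exact key (C 0) (C 1) (C 2) (C 9) h01 h02 h12
      (ne_of_ne_of_eq h69.symm h6) (ne_of_ne_of_eq h49.symm h4)
      (ne_of_ne_of_eq h89.symm h8)
  · -- (b, c, b) : witness 10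
    exact gen (C 1) (C 0) (C 2) (C 5) (C 7) (C 10) h01.symm h12 h02
      (ne_of_ne_of_eq h56 h6) h15.symm (ne_of_ne_of_eq h78 h8) h07.symm
      h510.symm (ne_of_ne_of_eq h410.symm h4) h710.symm
  · -- (b, c, c) : witness 11
    exact gen (C 2) (C 0) (C 1) (C 3) (C 7) (C 11) h02.symm h12.symm h01
      (ne_of_ne_of_eq h34 h4) h23.symm (ne_of_ne_of_eq h78 h8) h07.symm
      h311.symm (ne_of_ne_of_eq h611.symm h6) h711.symm

section Emb

variable (p : ℕ) [Fact p.Prime]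

lemma mem_projReps_1 (a b : ZMod p) : ![1, a, b] ∈ projReps p := by
  simp only [projReps, Finset.mem_union, Finset.mem_image, Finset.mem_singleton,
    Finset.mem_univ, true_and]
  exact Or.inr ⟨(a, b), rfl⟩

lemma mem_projReps_2 (a : ZMod p) : ![0, 1, a] ∈ projReps p := by
  simp only [projReps, Finset.mem_union, Finset.mem_image, Finset.mem_singleton,
    Finset.mem_univ, true_and]
  exact Or.inl (Or.inr ⟨a, rfl⟩)

lemma mem_projReps_3 : ![0, 0, 1] ∈ projReps p := by
  simp [projReps]

lemma wvecs_mem (i : Fin 13) : wvecs p i ∈ projReps p := by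
  fin_cases i <;>
    first
      | exact mem_projReps_3 p
      | exact mem_projReps_2 p _
      | exact mem_projReps_1 p _ _

lemma valMinAbs_one' (hp3 : 3 ≤ p) : ((1 : ZMod p)).valMinAbs = 1 := by
  haveI : NeZero p := ⟨by omega⟩
  haveI : Fact (1 < p) := ⟨by omega⟩
  rw [ZMod.valMinAbs_def_pos, ZMod.val_one, if_pos (by omega)]
  norm_num

lemma valMinAbs_neg_one' (hp3 : 3 ≤ p) : ((-1 : ZMod p)).valMinAbs = -1 := by
  haveI : NeZero p := ⟨by omega⟩
  haveI : Fact (1 < p) := ⟨by omega⟩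
  rw [ZMod.valMinAbs_neg_of_ne_half (by rw [ZMod.val_one]; omega), valMinAbs_one' p hp3]

lemma wvecs_valMinAbs (hp3 : 3 ≤ p) (i : Fin 13) :
    (fun k => ((wvecs p i k).valMinAbs)) = uvecs i := by
  have v1 := valMinAbs_one' p hp3
  have vm1 := valMinAbs_neg_one' p hp3
  fin_cases i
  · show (fun k => (((![1,0,0] : Fin 3 → ZMod p) k).valMinAbs)) = (![1,0,0] : Fin 3 → ℤ)
    funext k; fin_cases k <;> simp [v1, vm1]
  · show (fun k => (((![0,1,0] : Fin 3 → ZMod p) k).valMinAbs)) = (![0,1,0] : Fin 3 → ℤ)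
    funext k; fin_cases k <;> simp [v1, vm1]
  · show (fun k => (((![0,0,1] : Fin 3 → ZMod p) k).valMinAbs)) = (![0,0,1] : Fin 3 → ℤ)
    funext k; fin_cases k <;> simp [v1, vm1]
  · show (fun k => (((![1,1,0] : Fin 3 → ZMod p) k).valMinAbs)) = (![1,1,0] : Fin 3 → ℤ)
    funext k; fin_cases k <;> simp [v1, vm1]
  · show (fun k => (((![1,-1,0] : Fin 3 → ZMod p) k).valMinAbs)) = (![1,-1,0] : Fin 3 → ℤ)
    funext k; fin_cases k <;> simp [v1, vm1]
  · show (fun k => (((![1,0,1] : Fin 3 → ZMod p) k).valMinAbs)) = (![1,0,1] : Fin 3 → ℤ)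
    funext k; fin_cases k <;> simp [v1, vm1]
  · show (fun k => (((![1,0,-1] : Fin 3 → ZMod p) k).valMinAbs)) = (![1,0,-1] : Fin 3 → ℤ)
    funext k; fin_cases k <;> simp [v1, vm1]
  · show (fun k => (((![0,1,1] : Fin 3 → ZMod p) k).valMinAbs)) = (![0,1,1] : Fin 3 → ℤ)
    funext k; fin_cases k <;> simp [v1, vm1]
  · show (fun k => (((![0,1,-1] : Fin 3 → ZMod p) k).valMinAbs)) = (![0,1,-1] : Fin 3 → ℤ)
    funext k; fin_cases k <;> simp [v1, vm1]
  · show (fun k => (((![1,1,1] : Fin 3 → ZMod p) k).valMinAbs)) = (![1,1,1] : Fin 3 → ℤ)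
    funext k; fin_cases k <;> simp [v1, vm1]
  · show (fun k => (((![1,1,-1] : Fin 3 → ZMod p) k).valMinAbs)) = (![1,1,-1] : Fin 3 → ℤ)
    funext k; fin_cases k <;> simp [v1, vm1]
  · show (fun k => (((![1,-1,1] : Fin 3 → ZMod p) k).valMinAbs)) = (![1,-1,1] : Fin 3 → ℤ)
    funext k; fin_cases k <;> simp [v1, vm1]
  · show (fun k => (((![1,-1,-1] : Fin 3 → ZMod p) k).valMinAbs)) = (![1,-1,-1] : Fin 3 → ℤ)
    funext k; fin_cases k <;> simp [v1, vm1]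

lemma uvecs_mem (hp3 : 3 ≤ p) (i : Fin 13) : uvecs i ∈ ERVerts p := by
  rw [ERVerts, Finset.mem_image]
  exact ⟨wvecs p i, wvecs_mem p i, wvecs_valMinAbs p hp3 i⟩

lemma uvecs_inj : Function.Injective uvecs := by decide

lemma uvecs_dot (i j : Fin 13) :
    dotProduct (uvecs i) (uvecs j) = 0 ↔
      dotProduct (g13Z i) (g13Z j) = 0 := by
  revert i j; decide

noncomputable def theEmb (hp3 : 3 ≤ p) : G13 ↪g ERGraph p where
  toFun := fun i => ⟨uvecs i, uvecs_mem p hp3 i⟩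
  inj' := by
    intro i j h
    exact uvecs_inj (congrArg Subtype.val h)
  map_rel_iff' := by
    intro i j
    rw [ERGraph, SimpleGraph.fromRel_adj, g13_adj_iff]
    constructor
    · rintro ⟨hne, hd | hd⟩
      · exact ⟨fun h => hne (by rw [h]), (uvecs_dot i j).1 hd⟩
      · refine ⟨fun h => hne (by rw [h]), (uvecs_dot i j).1 ?_⟩
        rw [dotProduct_comm]; exact hd
    · rintro ⟨hne, hd⟩
      exact ⟨fun h => hne (uvecs_inj (congrArg Subtype.val h)),
        Or.inl ((uvecs_dot i j).2 hd)⟩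

end Emb

/-- For every odd prime `p`, `ER'(p)` contains an (induced) copy of `G₁₃`, and
hence has chromatic number at least 4. -/
theorem ERGraph_contains_G13 (p : ℕ) [Fact p.Prime] (hp : Odd p) (hp3 : 3 ≤ p) :
    Nonempty (G13 ↪g ERGraph p) ∧ 4 ≤ (ERGraph p).chromaticNumber := by
  refine ⟨⟨theEmb p hp3⟩, ?_⟩
  have hncol : ¬ (ERGraph p).Colorable 3 := fun h =>
    g13_not_colorable (SimpleGraph.Colorable.of_hom (theEmb p hp3).toHom h)
  have h3 : ¬ (ERGraph p).chromaticNumber ≤ (3 : ℕ) := by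
    rw [SimpleGraph.chromaticNumber_le_iff_colorable]
    exact hncol
  have hlt : (3 : ℕ∞) < (ERGraph p).chromaticNumber := by
    push_cast at h3
    exact lt_of_not_ge h3
  calc (4 : ℕ∞) = 3 + 1 := by norm_num
    _ ≤ (ERGraph p).chromaticNumber := Order.add_one_le_of_lt hlt
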